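/- Step (1) of the virial derivation (evaluation of the time-derivative term under helical symmetry): let 𝒥 be a C¹ compactly supported covector field on ℝ³, let b, Ω ∈ ℝ, and let φ_b be the vector field φ_b(x) = (−x₂, x₁ − b, 0). Define the helical time derivative ∂_t𝒥_k := −Ω [ ∂_l(φ_b^l 𝒥_k) + 𝒥_l ∂_k φ_b^l ]. Then ∫_{ℝ³} x^k (∂_t𝒥_k) dV = −bΩ ∫_{ℝ³} 𝒥₂ dV. -/

import Mathlib

noncomputable section
open MeasureTheory Filter Topology Real

abbrev E3 := EuclideanSpace ℝ (Fin 3)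

/-- Partial derivative in the `i`-th coordinate direction. -/
noncomputable def pd (i : Fin 3) (f : E3 → ℝ) (x : E3) : ℝ :=
  fderiv ℝ f x (EuclideanSpace.single i 1)

/-- Flat Laplacian on `ℝ³`. -/
noncomputable def lap (f : E3 → ℝ) (x : E3) : ℝ := ∑ i, pd i (fun y => pd i f y) x

/-- Surface integral over the sphere of radius `r` (centered at the origin) of the outward
normal component of the vector field with components `F · i`. -/
noncomputable def flux (F : E3 → Fin 3 → ℝ) (r : ℝ) : ℝ :=
  r ^ 2 * ∫ ω : Metric.sphere (0 : E3) 1,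
      (∑ i, F (r • (ω : E3)) i * (ω : E3) i) ∂((volume : Measure E3).toSphere)

/-- Tracefree extrinsic curvature `K̂_i^j` built from lapse `a` and shift `β`. -/
noncomputable def Khat (a : E3 → ℝ) (β : E3 → Fin 3 → ℝ) (i j : Fin 3) (x : E3) : ℝ :=
  (1 / (2 * a x)) *
    (pd i (fun y => β y j) x + pd j (fun y => β y i) x
      - (2 / 3) * (if i = j then (1 : ℝ) else 0) * ∑ k, pd k (fun y => β y k) x)

/-- Double contraction `K̂_i^j K̂_j^i`. -/
noncomputable def KK (a : E3 → ℝ) (β : E3 → Fin 3 → ℝ) (x : E3) : ℝ :=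
  ∑ i, ∑ j, Khat a β i j x * Khat a β j i x
/-- The rotational vector field `φ_b(x) = (−x₂, x₁ − b, 0)` about the point `(0, b)`. -/
noncomputable def phib (b : ℝ) (x : E3) : Fin 3 → ℝ := ![-(x 1), x 0 - b, 0]

lemma diff_coord (j : Fin 3) : Differentiable ℝ (fun y : E3 => y j) :=
  (EuclideanSpace.proj (𝕜 := ℝ) j).differentiable

lemma pd_coord (i j : Fin 3) (x : E3) : pd i (fun y => y j) x = if j = i then 1 else 0 := by
  have : (fun y : E3 => y j) = ⇑(EuclideanSpace.proj (𝕜 := ℝ) j) := rfl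
  rw [pd, this, ContinuousLinearMap.fderiv]
  simp [EuclideanSpace.single_apply]

lemma integral_pd_eq_zero (g : E3 → ℝ) (hg : ContDiff ℝ 1 g) (hs : HasCompactSupport g)
    (i : Fin 3) : ∫ x : E3, pd i g x = 0 := by
  obtain ⟨C, hC⟩ := hg.lipschitzWith_of_hasCompactSupport hs one_ne_zero
  have h := LipschitzWith.integral_lineDeriv_mul_eq (μ := (volume : Measure E3))
    (LipschitzWith.const (1 : ℝ)) hC hs (EuclideanSpace.single i 1)
  have h1 : ∀ x : E3, lineDeriv ℝ (fun _ : E3 => (1:ℝ)) x (EuclideanSpace.single i 1) = 0 := by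
    intro x
    rw [(differentiableAt_const (1:ℝ)).lineDeriv_eq_fderiv, fderiv_fun_const]
    simp
  simp only [h1, zero_mul, integral_zero, mul_one] at h
  have h2 : ∀ x : E3, lineDeriv ℝ g x (-(EuclideanSpace.single i 1)) = - pd i g x := by
    intro x
    rw [((hg.differentiable one_ne_zero) x).lineDeriv_eq_fderiv, map_neg, pd]
  simp only [h2] at h
  rw [integral_neg] at h
  linarith


/-- Step (1) of the virial derivation: for a C¹ compactly supported covector field 𝒥 and the
helical time derivative `∂_t𝒥_k = −Ω[∂_l(φ_b^l 𝒥_k) + 𝒥_l ∂_k φ_b^l]`,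
`∫ x^k ∂_t𝒥_k dV = −bΩ ∫ 𝒥₂ dV`. -/
theorem virial_step1
    (𝒥 : E3 → Fin 3 → ℝ) (b Ω : ℝ)
    (h𝒥C : ∀ k, ContDiff ℝ 1 fun x => 𝒥 x k)
    (h𝒥supp : ∀ k, HasCompactSupport fun x => 𝒥 x k) :
    (∫ x : E3, ∑ k, x k *
        (-Ω * ((∑ l, pd l (fun y => phib b y l * 𝒥 y k) x)
          + ∑ l, 𝒥 x l * pd k (fun y => phib b y l) x)))
      = -(b * Ω) * ∫ x : E3, 𝒥 x 1 := by
  have hJd : ∀ k, Differentiable ℝ (fun y => 𝒥 y k) := fun k => (h𝒥C k).differentiable one_ne_zero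
  have hph0 : (fun y : E3 => phib b y 0) = fun y : E3 => -(y 1) := by funext y; simp [phib]
  have hph1 : (fun y : E3 => phib b y 1) = fun y : E3 => y 0 - b := by funext y; simp [phib]
  have hph2 : (fun y : E3 => phib b y 2) = fun _ : E3 => (0:ℝ) := by funext y; simp [phib]
  have hphiC : ∀ l, ContDiff ℝ 1 (fun y : E3 => phib b y l) := by
    intro l
    fin_cases l
    · show ContDiff ℝ 1 fun y : E3 => phib b y 0
      rw [hph0]; exact ((EuclideanSpace.proj (𝕜 := ℝ) (1 : Fin 3)).contDiff).neg
    · show ContDiff ℝ 1 fun y : E3 => phib b y 1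
      rw [hph1]; exact ((EuclideanSpace.proj (𝕜 := ℝ) (0 : Fin 3)).contDiff).sub contDiff_const
    · show ContDiff ℝ 1 fun y : E3 => phib b y 2
      rw [hph2]; exact contDiff_const
  have hphid : ∀ l, Differentiable ℝ (fun y : E3 => phib b y l) :=
    fun l => (hphiC l).differentiable one_ne_zero
  -- derivative of the divergence-form term
  have key1 : ∀ (k l : Fin 3) (x : E3),
      pd l (fun y : E3 => -Ω * (y k * (phib b y l * 𝒥 y k))) x
        = -Ω * ((if k = l then (1:ℝ) else 0) * (phib b x l * 𝒥 x k)
            + x k * pd l (fun y => phib b y l * 𝒥 y k) x) := by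
    intro k l x
    have hmul : DifferentiableAt ℝ (fun y : E3 => phib b y l * 𝒥 y k) x :=
      ((hphid l).mul (hJd k)) x
    rw [pd, fderiv_const_mul (((diff_coord k) x).fun_mul hmul),
      fderiv_fun_mul ((diff_coord k) x) hmul]
    simp only [ContinuousLinearMap.coe_smul', Pi.smul_apply, ContinuousLinearMap.add_apply,
      smul_eq_mul]
    have hc := pd_coord l k x
    rw [pd] at hc
    rw [hc, pd]
    ring
  have hA : ∀ (k : Fin 3) (x : E3),
      pd k (fun y : E3 => phib b y 0) x = -(if (1:Fin 3) = k then (1:ℝ) else 0) := by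
    intro k x
    rw [hph0, pd, fderiv_fun_neg]
    simp only [ContinuousLinearMap.neg_apply]
    have hc := pd_coord k 1 x
    rw [pd] at hc
    rw [hc]
  have hB : ∀ (k : Fin 3) (x : E3),
      pd k (fun y : E3 => phib b y 1) x = (if (0:Fin 3) = k then (1:ℝ) else 0) := by
    intro k x
    rw [hph1, pd, fderiv_sub_const]
    have hc := pd_coord k 0 x
    rw [pd] at hc
    rw [hc]
  have hC2 : ∀ (k : Fin 3) (x : E3), pd k (fun y : E3 => phib b y 2) x = 0 := by
    intro k x
    rw [hph2, pd, fderiv_fun_const]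
    simp
  have hpt : ∀ x : E3,
      (∑ k, x k * (-Ω * ((∑ l, pd l (fun y => phib b y l * 𝒥 y k) x)
          + ∑ l, 𝒥 x l * pd k (fun y => phib b y l) x)))
        = (∑ k, ∑ l, pd l (fun y : E3 => -Ω * (y k * (phib b y l * 𝒥 y k))) x)
            + (-(b * Ω) * 𝒥 x 1) := by
    intro x
    simp only [Fin.sum_univ_three, key1, hA, hB, hC2]
    have e0 : phib b x 0 = -(x 1) := by simp [phib]
    have e1 : phib b x 1 = x 0 - b := by simp [phib]
    have e2 : phib b x 2 = 0 := by simp [phib]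
    rw [e0, e1, e2]
    norm_num [Fin.ext_iff]
    ring
  simp only [hpt]
  -- integrability
  have hGC : ∀ k l : Fin 3, ContDiff ℝ 1 (fun y : E3 => -Ω * (y k * (phib b y l * 𝒥 y k))) :=
    fun k l => contDiff_const.mul (((EuclideanSpace.proj (𝕜 := ℝ) k).contDiff).mul
      ((hphiC l).mul (h𝒥C k)))
  have hGs : ∀ k l : Fin 3, HasCompactSupport
      (fun y : E3 => -Ω * (y k * (phib b y l * 𝒥 y k))) := by
    intro k l
    have he : (fun y : E3 => -Ω * (y k * (phib b y l * 𝒥 y k)))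
        = fun y : E3 => (-Ω * (y k * phib b y l)) * 𝒥 y k := by
      funext y; ring
    rw [he]
    exact (h𝒥supp k).mul_left
  have hint : ∀ k l : Fin 3,
      Integrable (fun x : E3 => pd l (fun y : E3 => -Ω * (y k * (phib b y l * 𝒥 y k))) x) := by
    intro k l
    have hc : Continuous (fun x : E3 =>
        pd l (fun y : E3 => -Ω * (y k * (phib b y l * 𝒥 y k))) x) := by
      simp only [pd]
      exact ((hGC k l).continuous_fderiv one_ne_zero).clm_apply continuous_const
    have hsupp : HasCompactSupport (fun x : E3 =>
        pd l (fun y : E3 => -Ω * (y k * (phib b y l * 𝒥 y k))) x) := by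
      simp only [pd]
      exact (hGs k l).fderiv_apply ℝ (EuclideanSpace.single l 1)
    exact hc.integrable_of_hasCompactSupport hsupp
  have hR : Integrable (fun x : E3 => -(b * Ω) * 𝒥 x 1) :=
    (((h𝒥C 1).continuous).integrable_of_hasCompactSupport (h𝒥supp 1)).const_mul _
  rw [integral_add (integrable_finset_sum _ (fun k _ => integrable_finset_sum _
      (fun l _ => hint k l))) hR,
    integral_finset_sum _ (fun k _ => integrable_finset_sum _ (fun l _ => hint k l))]
  have hz : ∀ k l : Fin 3,
      (∫ x : E3, pd l (fun y : E3 => -Ω * (y k * (phib b y l * 𝒥 y k))) x) = 0 := by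
    intro k l
    exact integral_pd_eq_zero _ (hGC k l) (hGs k l) l
  rw [integral_const_mul]
  simp only [integral_finset_sum _ (fun l _ => hint _ l), hz]
  simp
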